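/- arXiv:1705.08525 — 5 statements merged into one kernel-verified Lean document; each statement's English description precedes it below -/
import Mathlib

section
/- Suppose the expected conditional variance V of the unbiased estimator Ĥ is strictly positive. Then for every constant μ ∈ ℝ there exists a shrinkage coefficient α with 0 < α < 1 such that the shrunk estimator k̃(ω,w) = α·μ + (1−α)·Ĥ(ω,w) has strictly smaller risk than Ĥ, i.e. R(k̃) < R(Ĥ). (Theorem: Stein effect on kernel approximation.) -/
open MeasureTheory ProbabilityTheory

/-- **Stein effect on kernel approximation.**
Suppose the expected conditional variance `V` of the conditionally unbiased estimator `H`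
is strictly positive.  Then for every constant `μ ∈ ℝ` there exists a shrinkage coefficient
`α` with `0 < α < 1` such that the shrunk estimator
`k̃ (ω, w) = α • μ + (1 - α) • H (ω, w)` has strictly smaller risk than `H`. -/
theorem stein_effect_on_kernel_approximation
    {Ω W : Type*} [MeasurableSpace Ω] [MeasurableSpace W]
    (P : Measure Ω) (Q : Measure W) [IsProbabilityMeasure P] [IsProbabilityMeasure Q]
    (T : Ω → ℝ) (H : Ω → W → ℝ)
    (hT : MemLp T 2 P)
    (hH : MemLp (fun p : Ω × W => H p.1 p.2) 2 (P.prod Q))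
    (hUnbiased : ∀ᵐ ω ∂P, ∫ w, H ω w ∂Q = T ω)
    (R : (Ω → W → ℝ) → ℝ)
    (hR : ∀ g : Ω → W → ℝ, R g = ∫ ω, ∫ w, (g ω w - T ω) ^ 2 ∂Q ∂P)
    (V : ℝ)
    (hV : V = ∫ ω, variance (fun w => H ω w) Q ∂P)
    (hVpos : 0 < V) :
    ∀ μ : ℝ, ∃ α : ℝ, 0 < α ∧ α < 1 ∧
      R (fun ω w => α * μ + (1 - α) * H ω w) < R H := by
  intro μ
  -- the "bias" term
  set B := ∫ ω, (μ - T ω) ^ 2 ∂P with hBdef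
  have hBnonneg : 0 ≤ B := integral_nonneg fun ω => sq_nonneg _
  set α := V / (2 * V + B) with hαdef
  have hden : 0 < 2 * V + B := by linarith
  have hα0 : 0 < α := div_pos hVpos hden
  have hα1 : α < 1 := by
    rw [hαdef, div_lt_one hden]; linarith
  have hαval : α * (2 * V + B) = V := div_mul_cancel₀ V (ne_of_gt hden)
  refine ⟨α, hα0, hα1, ?_⟩
  -- the centered function on the product space
  set G : Ω × W → ℝ := fun p => H p.1 p.2 - T p.1 with hGdef
  have hTfst : MemLp (fun p : Ω × W => T p.1) 2 (P.prod Q) :=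
    hT.comp_measurePreserving ⟨measurable_fst, by rw [Measure.map_fst_prod]; simp⟩
  have hG : MemLp G 2 (P.prod Q) := hH.sub hTfst
  have hG2int : Integrable (fun p => G p ^ 2) (P.prod Q) := hG.integrable_sq
  -- slices
  have hG2slice : ∀ᵐ ω ∂P, Integrable (fun w => (H ω w - T ω) ^ 2) Q :=
    hG2int.prod_right_ae
  have hGslice : ∀ᵐ ω ∂P, Integrable (fun w => H ω w - T ω) Q :=
    (hG.integrable one_le_two).prod_right_ae
  have hHslice : ∀ᵐ ω ∂P, Integrable (fun w => H ω w) Q :=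
    (hH.integrable one_le_two).prod_right_ae
  -- mean zero of the centered slice
  have hmean : ∀ᵐ ω ∂P, ∫ w, (H ω w - T ω) ∂Q = 0 := by
    filter_upwards [hUnbiased, hHslice] with ω hu hint
    rw [integral_sub hint (integrable_const _), hu, integral_const]
    simp
  -- Memℒp of slices
  have hHmem : ∀ᵐ ω ∂P, MemLp (fun w => H ω w) 2 Q := by
    filter_upwards [hG2slice, hGslice, hHslice] with ω h2 h1 hH1
    have hsm : AEStronglyMeasurable (fun w => H ω w) Q := hH1.aestronglyMeasurable
    have hsm' : AEStronglyMeasurable (fun w => H ω w - T ω) Q := h1.aestronglyMeasurable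
    have hmem : MemLp (fun w => H ω w - T ω) 2 Q := by
      refine (memLp_two_iff_integrable_sq hsm').mpr ?_
      simpa [pow_two] using h2
    have := hmem.add (memLp_const (T ω))
    convert this using 1
    funext w; simp
  -- the risk of `H` equals `V`
  have hRH : R H = V := by
    rw [hR, hV]
    refine integral_congr_ae ?_
    filter_upwards [hHmem, hUnbiased, hmean] with ω hmem hu _
    rw [variance_eq_integral hmem.aemeasurable]
    congr 1
    funext w
    simp [hu]
  -- integrability of the conditional risk and of the bias density
  have hIint : Integrable (fun ω => ∫ w, (H ω w - T ω) ^ 2 ∂Q) P := by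
    have := hG2int.integral_prod_left
    simpa [hGdef] using this
  have hBint : Integrable (fun ω => (μ - T ω) ^ 2) P := by
    have : MemLp (fun ω => μ - T ω) 2 P := (memLp_const μ).sub hT
    simpa [pow_two] using this.integrable_sq
  -- pointwise (in ω) expansion of the shrunk risk
  have hptwise : ∀ᵐ ω ∂P,
      ∫ w, (α * μ + (1 - α) * H ω w - T ω) ^ 2 ∂Q
        = (1 - α) ^ 2 * ∫ w, (H ω w - T ω) ^ 2 ∂Q + α ^ 2 * (μ - T ω) ^ 2 := by
    filter_upwards [hG2slice, hGslice, hmean] with ω h2 h1 hm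
    have key : ∀ w, (α * μ + (1 - α) * H ω w - T ω) ^ 2
        = (1 - α) ^ 2 * (H ω w - T ω) ^ 2
          + (2 * α * (1 - α) * (μ - T ω)) * (H ω w - T ω)
          + α ^ 2 * (μ - T ω) ^ 2 := fun w => by ring
    simp_rw [key]
    have i2 : Integrable (fun w => (1 - α) ^ 2 * (H ω w - T ω) ^ 2) Q := h2.const_mul _
    have i1 : Integrable (fun w => (2 * α * (1 - α) * (μ - T ω)) * (H ω w - T ω)) Q :=
      h1.const_mul _
    have i12 : Integrable (fun w => (1 - α) ^ 2 * (H ω w - T ω) ^ 2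
        + (2 * α * (1 - α) * (μ - T ω)) * (H ω w - T ω)) Q := i2.add i1
    rw [integral_add i12 (integrable_const _), integral_add i2 i1,
      integral_const_mul, integral_const_mul, integral_const, hm]
    simp
  -- the risk of the shrunk estimator
  have hRk : R (fun ω w => α * μ + (1 - α) * H ω w)
      = (1 - α) ^ 2 * V + α ^ 2 * B := by
    have j1 : Integrable (fun ω => (1 - α) ^ 2 * ∫ w, (H ω w - T ω) ^ 2 ∂Q) P :=
      hIint.const_mul _
    have j2 : Integrable (fun ω => α ^ 2 * (μ - T ω) ^ 2) P := hBint.const_mul _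
    rw [hR, integral_congr_ae hptwise, integral_add j1 j2,
      integral_const_mul, integral_const_mul]
    have : ∫ ω, ∫ w, (H ω w - T ω) ^ 2 ∂Q ∂P = V := by rw [← hR H, hRH]
    rw [this, hBdef]
  rw [hRk, hRH]
  nlinarith [sq_nonneg α, mul_pos hα0 hVpos, mul_nonneg hα0.le hBnonneg]
end

section
/- Range of improving shrinkage coefficients: suppose V + B(μ) > 0 for a given μ ∈ ℝ. Then for every α with 0 < α < 2V/(V + B(μ)), the shrunk estimator k̃(ω,w) = α·μ + (1−α)·Ĥ(ω,w) satisfies R(k̃) < R(Ĥ). -/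
open MeasureTheory ProbabilityTheory

/-- **Range of improving shrinkage coefficients.**
Suppose `V + B μ > 0` for a given `μ ∈ ℝ`.  Then for every `α` with
`0 < α < 2V / (V + B μ)`, the shrunk estimator
`k̃ (ω, w) = α • μ + (1 - α) • H (ω, w)` satisfies `R k̃ < R H`. -/
theorem shrinkage_improvement_range
    {Ω W : Type*} [MeasurableSpace Ω] [MeasurableSpace W]
    (P : Measure Ω) (Q : Measure W) [IsProbabilityMeasure P] [IsProbabilityMeasure Q]
    (T : Ω → ℝ) (H : Ω → W → ℝ)
    (hT : MemLp T 2 P)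
    (hH : MemLp (fun p : Ω × W => H p.1 p.2) 2 (P.prod Q))
    (hUnbiased : ∀ᵐ ω ∂P, ∫ w, H ω w ∂Q = T ω)
    (R : (Ω → W → ℝ) → ℝ)
    (hR : ∀ g : Ω → W → ℝ, R g = ∫ ω, ∫ w, (g ω w - T ω) ^ 2 ∂Q ∂P)
    (V : ℝ)
    (hV : V = ∫ ω, variance (fun w => H ω w) Q ∂P)
    (μ : ℝ) (B : ℝ)
    (hB : B = ∫ ω, (μ - T ω) ^ 2 ∂P)
    (hPos : 0 < V + B) :
    ∀ α : ℝ, 0 < α → α < 2 * V / (V + B) →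
      R (fun ω w => α * μ + (1 - α) * H ω w) < R H := by
  intro α hα hα2
  have hHint : Integrable (fun p : Ω × W => H p.1 p.2) (P.prod Q) := hH.integrable one_le_two
  have hHsq : Integrable (fun p : Ω × W => (H p.1 p.2) ^ 2) (P.prod Q) := hH.integrable_sq
  have hTint : Integrable T P := hT.integrable one_le_two
  set g1 : Ω → ℝ := fun ω => ∫ w, (H ω w - T ω) ^ 2 ∂Q with hg1def
  set g2 : Ω → ℝ := fun ω => (μ - T ω) ^ 2 with hg2def
  -- a.e. section facts
  have hsec : ∀ᵐ ω ∂P,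
      Integrable (fun w => H ω w) Q ∧
      (∀ c : ℝ, Integrable (fun w => (H ω w - c) ^ 2) Q) ∧
      (∫ w, (H ω w - T ω) ∂Q = 0) ∧
      variance (fun w => H ω w) Q = g1 ω ∧
      g1 ω = (∫ w, (H ω w) ^ 2 ∂Q) - (T ω) ^ 2 := by
    filter_upwards [hHint.prod_right_ae, hHsq.prod_right_ae, hUnbiased] with ω h1 h2 h3
    have hintc : ∀ c : ℝ, Integrable (fun w => (H ω w - c) ^ 2) Q := by
      intro c
      have heq : (fun w => (H ω w - c) ^ 2)
          = fun w => ((H ω w) ^ 2 - (2 * c) * H ω w) + c ^ 2 := by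
        ext w; ring
      have iA : Integrable (fun w => (H ω w) ^ 2 - (2 * c) * H ω w) Q :=
        h2.sub (h1.const_mul _)
      rw [heq]
      exact iA.add (integrable_const _)
    have hzero : ∫ w, (H ω w - T ω) ∂Q = 0 := by
      rw [integral_sub h1 (integrable_const _), integral_const]
      simp [h3]
    have hsplit : ∀ c : ℝ, ∫ w, (H ω w - c) ^ 2 ∂Q
        = (∫ w, (H ω w) ^ 2 ∂Q) - 2 * c * (∫ w, H ω w ∂Q) + c ^ 2 := by
      intro c
      have heq : (fun w => (H ω w - c) ^ 2)
          = fun w => ((H ω w) ^ 2 - (2 * c) * H ω w) + c ^ 2 := by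
        ext w; ring
      have iA : Integrable (fun w => (H ω w) ^ 2 - (2 * c) * H ω w) Q :=
        h2.sub (h1.const_mul _)
      have iB : Integrable (fun w => (2 * c) * H ω w) Q := h1.const_mul _
      rw [heq, integral_add iA (integrable_const _), integral_sub h2 iB,
        integral_const_mul, integral_const]
      simp
    have hmem : MemLp (fun w => H ω w) 2 Q :=
      (memLp_two_iff_integrable_sq h1.aestronglyMeasurable).mpr h2
    have hvar : variance (fun w => H ω w) Q = g1 ω := by
      rw [variance_eq_integral hmem.aestronglyMeasurable.aemeasurable]
      simp only [hg1def]
      refine integral_congr_ae (ae_of_all _ fun w => ?_)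
      simp [h3]
    refine ⟨h1, hintc, hzero, hvar, ?_⟩
    simp only [hg1def, hsplit (T ω), h3]
    ring
  -- integrability of g1 and g2 over P
  have hg2int : Integrable g2 P := by
    have heq : g2 = fun ω => (μ ^ 2 - (2 * μ) * T ω) + (T ω) ^ 2 := by
      ext ω; simp only [hg2def]; ring
    have iA : Integrable (fun ω => μ ^ 2 - (2 * μ) * T ω) P :=
      (integrable_const _).sub (hTint.const_mul _)
    rw [heq]
    exact iA.add hT.integrable_sq
  have hg1int : Integrable g1 P := by
    refine (Integrable.congr (hHsq.integral_prod_left.sub hT.integrable_sq) ?_)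
    filter_upwards [hsec] with ω hω
    exact hω.2.2.2.2.symm
  -- the key inner-integral identity
  have hkey : ∀ᵐ ω ∂P,
      (∫ w, ((α * μ + (1 - α) * H ω w) - T ω) ^ 2 ∂Q)
        = (1 - α) ^ 2 * g1 ω + α ^ 2 * g2 ω := by
    filter_upwards [hsec] with ω hω
    obtain ⟨hHi, hintc, hzero, -, -⟩ := hω
    have h1 : Integrable (fun w => H ω w - T ω) Q := hHi.sub (integrable_const _)
    have expand : (fun w => ((α * μ + (1 - α) * H ω w) - T ω) ^ 2)
        = fun w => ((1 - α) ^ 2 * (H ω w - T ω) ^ 2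
            + (2 * α * (1 - α) * (μ - T ω)) * (H ω w - T ω))
            + α ^ 2 * (μ - T ω) ^ 2 := by
      ext w; ring
    have iq : Integrable (fun w => (1 - α) ^ 2 * (H ω w - T ω) ^ 2) Q :=
      (hintc (T ω)).const_mul _
    have il : Integrable (fun w => (2 * α * (1 - α) * (μ - T ω)) * (H ω w - T ω)) Q :=
      h1.const_mul _
    have isum : Integrable (fun w => (1 - α) ^ 2 * (H ω w - T ω) ^ 2
        + (2 * α * (1 - α) * (μ - T ω)) * (H ω w - T ω)) Q := iq.add il
    rw [expand, integral_add isum (integrable_const _), integral_add iq il,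
      integral_const_mul, integral_const_mul, integral_const, hzero]
    simp only [hg1def, hg2def]
    simp
  -- compute the risks
  have hRH : R H = V := by
    rw [hR, hV]
    refine integral_congr_ae ?_
    filter_upwards [hsec] with ω hω
    exact hω.2.2.2.1.symm
  have hVg1 : V = ∫ ω, g1 ω ∂P := by
    rw [hV]
    refine integral_congr_ae ?_
    filter_upwards [hsec] with ω hω
    exact hω.2.2.2.1
  have hRk : R (fun ω w => α * μ + (1 - α) * H ω w) = (1 - α) ^ 2 * V + α ^ 2 * B := by
    have iA : Integrable (fun ω => (1 - α) ^ 2 * g1 ω) P := hg1int.const_mul _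
    have iB : Integrable (fun ω => α ^ 2 * g2 ω) P := hg2int.const_mul _
    rw [hR, integral_congr_ae hkey, integral_add iA iB,
      integral_const_mul, integral_const_mul, hVg1, hB]
  have hαB : α * (V + B) < 2 * V := (lt_div_iff₀ hPos).mp hα2
  rw [hRk, hRH]
  nlinarith [sq_nonneg α]
end

section
/- Corollary (shrinkage estimator): suppose V > 0. Then, taking μ = 0 and α* = V/(V + ∫_Ω T(ω)² dP(ω)), the purely multiplicative shrinkage estimator k̃(ω,w) = (1−α*)·Ĥ(ω,w) has strictly smaller risk than the empirical-mean estimator: R((1−α*)·Ĥ) < R(Ĥ). -/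
open MeasureTheory ProbabilityTheory

/-- **Corollary (shrinkage estimator).**
Suppose `V > 0`.  Then, taking `μ = 0` and `α* = V / (V + ∫ T ω ² dP ω)`,
the purely multiplicative shrinkage estimator `k̃ (ω, w) = (1 - α*) • H (ω, w)`
has strictly smaller risk than the empirical-mean estimator:
`R ((1 - α*) • H) < R H`. -/
theorem shrinkage_estimator_corollary
    {Ω W : Type*} [MeasurableSpace Ω] [MeasurableSpace W]
    (P : Measure Ω) (Q : Measure W) [IsProbabilityMeasure P] [IsProbabilityMeasure Q]
    (T : Ω → ℝ) (H : Ω → W → ℝ)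
    (hT : MemLp T 2 P)
    (hH : MemLp (fun p : Ω × W => H p.1 p.2) 2 (P.prod Q))
    (hUnbiased : ∀ᵐ ω ∂P, ∫ w, H ω w ∂Q = T ω)
    (R : (Ω → W → ℝ) → ℝ)
    (hR : ∀ g : Ω → W → ℝ, R g = ∫ ω, ∫ w, (g ω w - T ω) ^ 2 ∂Q ∂P)
    (V : ℝ)
    (hV : V = ∫ ω, variance (fun w => H ω w) Q ∂P)
    (hVpos : 0 < V)
    (αStar : ℝ) (hαStar : αStar = V / (V + ∫ ω, T ω ^ 2 ∂P)) :
    R (fun ω w => (1 - αStar) * H ω w) < R H := by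
  classical
  set S : ℝ := ∫ ω, T ω ^ 2 ∂P with hS
  have hSnonneg : 0 ≤ S := integral_nonneg fun ω => sq_nonneg _
  -- T viewed on the product space
  have hfstMP : MeasurePreserving (Prod.fst : Ω × W → Ω) (P.prod Q) P :=
    ⟨measurable_fst, by simp [Measure.map_fst_prod]⟩
  have hT2 : MemLp (fun p : Ω × W => T p.1) 2 (P.prod Q) :=
    hT.comp_measurePreserving hfstMP
  have hHT : MemLp (fun p : Ω × W => H p.1 p.2 - T p.1) 2 (P.prod Q) := hH.sub hT2
  have hF : Integrable (fun p : Ω × W => (H p.1 p.2 - T p.1) ^ 2) (P.prod Q) :=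
    hHT.integrable_sq
  have hFslice : ∀ᵐ ω ∂P, Integrable (fun w => (H ω w - T ω) ^ 2) Q :=
    hF.prod_right_ae
  have hHsq : Integrable (fun p : Ω × W => (H p.1 p.2) ^ 2) (P.prod Q) :=
    hH.integrable_sq
  have hHsqslice : ∀ᵐ ω ∂P, Integrable (fun w => (H ω w) ^ 2) Q :=
    hHsq.prod_right_ae
  have hHint : Integrable (fun p : Ω × W => H p.1 p.2) (P.prod Q) :=
    hH.integrable one_le_two
  have hHslice : ∀ᵐ ω ∂P, Integrable (fun w => H ω w) Q := hHint.prod_right_ae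
  -- a.e. the slice is in L²
  have hHL2 : ∀ᵐ ω ∂P, MemLp (fun w => H ω w) 2 Q := by
    filter_upwards [hHsqslice, hHslice] with ω h1 h2
    exact (memLp_two_iff_integrable_sq h2.aestronglyMeasurable).2 h1
  -- variance equals the inner integral
  have hvar : ∀ᵐ ω ∂P,
      variance (fun w => H ω w) Q = ∫ w, (H ω w - T ω) ^ 2 ∂Q := by
    filter_upwards [hHL2, hUnbiased] with ω hL2 hmean
    rw [variance_eq_integral hL2.aestronglyMeasurable.aemeasurable]
    simp only [Pi.pow_apply, Pi.sub_apply, hmean]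
  -- R H = ∫ variance = V
  have hRH : R H = V := by
    rw [hR, hV]
    exact integral_congr_ae (hvar.mono fun ω h => h.symm)
  -- inner integral expansion for the shrunk estimator
  have hinner : ∀ᵐ ω ∂P,
      ∫ w, ((1 - αStar) * H ω w - T ω) ^ 2 ∂Q
        = (1 - αStar) ^ 2 * (∫ w, (H ω w - T ω) ^ 2 ∂Q) + αStar ^ 2 * T ω ^ 2 := by
    filter_upwards [hFslice, hHslice, hUnbiased] with ω hsq hint hmean
    have hsub : Integrable (fun w => H ω w - T ω) Q := hint.sub (integrable_const _)
    have hzero : ∫ w, (H ω w - T ω) ∂Q = 0 := by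
      rw [integral_sub hint (integrable_const _), integral_const]
      simp [hmean]
    have expand : ∀ w, ((1 - αStar) * H ω w - T ω) ^ 2
        = (1 - αStar) ^ 2 * (H ω w - T ω) ^ 2
          + ((-(2 * (1 - αStar) * αStar * T ω)) * (H ω w - T ω) + αStar ^ 2 * T ω ^ 2) := by
      intro w; ring
    calc ∫ w, ((1 - αStar) * H ω w - T ω) ^ 2 ∂Q
        = ∫ w, ((1 - αStar) ^ 2 * (H ω w - T ω) ^ 2
            + ((-(2 * (1 - αStar) * αStar * T ω)) * (H ω w - T ω)
              + αStar ^ 2 * T ω ^ 2)) ∂Q := by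
          exact integral_congr_ae (Filter.Eventually.of_forall expand)
      _ = (1 - αStar) ^ 2 * (∫ w, (H ω w - T ω) ^ 2 ∂Q) + αStar ^ 2 * T ω ^ 2 := by
          have i1 : Integrable (fun w => (1 - αStar) ^ 2 * (H ω w - T ω) ^ 2) Q :=
            hsq.const_mul _
          have i2 : Integrable
              (fun w => (-(2 * (1 - αStar) * αStar * T ω)) * (H ω w - T ω)) Q :=
            hsub.const_mul _
          have i3 : Integrable (fun w => αStar ^ 2 * T ω ^ 2) Q := integrable_const _
          have i23 : Integrable
              (fun w => (-(2 * (1 - αStar) * αStar * T ω)) * (H ω w - T ω)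
                + αStar ^ 2 * T ω ^ 2) Q := i2.add i3
          rw [integral_add i1 i23, integral_add i2 i3,
            integral_const_mul, integral_const_mul, hzero, integral_const]
          simp
  -- integrability of the pieces on Ω
  have hvInt : Integrable (fun ω => ∫ w, (H ω w - T ω) ^ 2 ∂Q) P :=
    hF.integral_prod_left
  have hT2Int : Integrable (fun ω => T ω ^ 2) P := hT.integrable_sq
  have hIntV : ∫ ω, (∫ w, (H ω w - T ω) ^ 2 ∂Q) ∂P = V := by
    rw [hV]
    exact integral_congr_ae (hvar.mono fun ω h => h.symm)
  -- risk of the shrunk estimator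
  have hRshrunk : R (fun ω w => (1 - αStar) * H ω w)
      = (1 - αStar) ^ 2 * V + αStar ^ 2 * S := by
    rw [hR]
    calc ∫ ω, ∫ w, ((1 - αStar) * H ω w - T ω) ^ 2 ∂Q ∂P
        = ∫ ω, ((1 - αStar) ^ 2 * (∫ w, (H ω w - T ω) ^ 2 ∂Q)
            + αStar ^ 2 * T ω ^ 2) ∂P := integral_congr_ae hinner
      _ = (1 - αStar) ^ 2 * V + αStar ^ 2 * S := by
          rw [integral_add (hvInt.const_mul _) (hT2Int.const_mul _),
            integral_const_mul, integral_const_mul, hIntV]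
  -- final arithmetic
  rw [hRshrunk, hRH]
  have hD : 0 < V + S := by linarith
  have hα : αStar = V / (V + S) := hαStar
  have hval : (1 - αStar) ^ 2 * V + αStar ^ 2 * S = V * S / (V + S) := by
    rw [hα]; field_simp; ring
  rw [hval, div_lt_iff₀ hD]
  nlinarith
end

section
/- Unbiasedness of random Fourier features for the Gaussian kernel: for every σ > 0 and every x, x' ∈ ℝ^d, if w is distributed according to the Gaussian measure N(0, σ^{-2} I_d) on ℝ^d, then ∫_{ℝ^d} [cos(⟨w, x⟩)·cos(⟨w, x'⟩) + sin(⟨w, x⟩)·sin(⟨w, x'⟩)] dN(0, σ^{-2} I_d)(w) = exp(−‖x − x'‖² / (2σ²)). -/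
open MeasureTheory ProbabilityTheory Complex
open scoped NNReal ENNReal

lemma gauss_charFun (v : ℝ≥0) (hv : v ≠ 0) (c : ℝ) :
    ∫ w : ℝ, Complex.exp (↑w * ↑c * Complex.I) ∂(gaussianReal 0 v)
      = Complex.exp (((-(c ^ 2 * (v:ℝ)) / 2 : ℝ) : ℂ)) := by
  have hvpos : (0:ℝ) < v := by exact_mod_cast pos_iff_ne_zero.mpr hv
  have hvC : ((v:ℝ):ℂ) ≠ 0 := by exact_mod_cast hvpos.ne'
  rw [gaussianReal_of_var_ne_zero 0 hv]
  have hpdf : gaussianPDF 0 v = fun x => (((gaussianPDFReal 0 v x).toNNReal : ℝ≥0) : ℝ≥0∞) := by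
    ext x; rw [gaussianPDF_def]; rfl
  rw [hpdf, integral_withDensity_eq_integral_smul
    ((measurable_gaussianPDFReal 0 v).real_toNNReal)]
  have hb : ((↑(-(1/(2*(v:ℝ)))) : ℂ)).re < 0 := by
    rw [Complex.ofReal_re]; exact neg_lt_zero.mpr (by positivity)
  set A := Real.sqrt (2 * Real.pi * v) with hA
  have hA0 : 0 < A := Real.sqrt_pos.mpr (by positivity)
  have h1 : ∀ x : ℝ, ((gaussianPDFReal 0 v x).toNNReal : ℝ≥0) • Complex.exp (↑x * ↑c * Complex.I)
      = ((A⁻¹ : ℝ) : ℂ) * Complex.exp ((↑(-(1/(2*(v:ℝ)))) : ℂ) * (x:ℂ)^2 + ((c:ℂ)*Complex.I)*(x:ℂ) + 0) := by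
    intro x
    rw [NNReal.smul_def, Real.coe_toNNReal _ (gaussianPDFReal_nonneg 0 v x)]
    simp only [gaussianPDFReal, sub_zero, ← hA]
    rw [Complex.real_smul]
    push_cast
    rw [mul_assoc, ← Complex.exp_add]
    congr 2
    field_simp
    ring
  simp_rw [h1]
  rw [integral_const_mul, integral_cexp_quadratic (by simpa using hb)]
  have hpow : ((Real.pi : ℂ) / -(↑(-(1/(2*(v:ℝ)))) : ℂ)) ^ (1/2 : ℂ) = (A : ℂ) := by
    push_cast
    rw [neg_neg]
    have : (Real.pi : ℂ) / (1/(2*(v:ℝ)) : ℂ) = ((2 * Real.pi * v : ℝ) : ℂ) := by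
      push_cast; field_simp
    rw [this]
    rw [show (1/2 : ℂ) = ((1/2 : ℝ) : ℂ) by push_cast; ring]
    rw [← Complex.ofReal_cpow (by positivity)]
    rw [hA, Real.sqrt_eq_rpow]
  rw [hpow]
  have harg : (0 : ℂ) - ((c:ℂ)*Complex.I)^2 / (4 * (↑(-(1/(2*(v:ℝ)))) : ℂ)) = ((-(c ^ 2 * (v:ℝ)) / 2 : ℝ) : ℂ) := by
    push_cast
    rw [mul_pow, Complex.I_sq]
    field_simp
    ring
  rw [harg]
  rw [← mul_assoc, ← Complex.ofReal_mul, inv_mul_cancel₀ hA0.ne', Complex.ofReal_one, one_mul]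

lemma gauss_integrable_cexp {α : Type*} [MeasurableSpace α] (μ : Measure α)
    [IsProbabilityMeasure μ] (g : α → ℝ) (hg : Measurable g) :
    Integrable (fun a => Complex.exp (↑(g a) * Complex.I)) μ := by
  apply Integrable.mono' (integrable_const 1)
  · exact (Complex.measurable_exp.comp ((Complex.measurable_ofReal.comp hg).mul_const
      Complex.I)).aestronglyMeasurable
  · refine Filter.Eventually.of_forall fun a => ?_
    simp [Complex.norm_exp]

lemma gauss_int_cos (v : ℝ≥0) (hv : v ≠ 0) (c : ℝ) :
    ∫ w : ℝ, Real.cos (w * c) ∂(gaussianReal 0 v)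
      = Real.exp (-(c ^ 2 * (v:ℝ)) / 2) := by
  have hint : Integrable (fun w : ℝ => Complex.exp (↑(w * c) * Complex.I)) (gaussianReal 0 v) :=
    gauss_integrable_cexp _ _ (measurable_id.mul_const c)
  have h := integral_re hint
  simp only [RCLike.re_to_complex] at h
  have h2 : ∫ w : ℝ, Complex.exp (↑(w * c) * Complex.I) ∂(gaussianReal 0 v)
      = Complex.exp (((-(c ^ 2 * (v:ℝ)) / 2 : ℝ) : ℂ)) := by
    rw [← gauss_charFun v hv c]
    congr 1; ext w; push_cast; ring_nf
  rw [h2] at h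
  simp only [Complex.exp_ofReal_mul_I_re] at h
  rw [h, Complex.exp_ofReal_re]

lemma gauss_int_cexp (v : ℝ≥0) (hv : v ≠ 0) (c : ℝ) :
    ∫ w : ℝ, Complex.exp (↑(w * c) * Complex.I) ∂(gaussianReal 0 v)
      = Complex.exp (((-(c ^ 2 * (v:ℝ)) / 2 : ℝ) : ℂ)) := by
  rw [← gauss_charFun v hv c]
  congr 1; ext w; push_cast; ring_nf

/-- **Unbiasedness of random Fourier features for the Gaussian kernel.**
For every `σ > 0` and every `x, x' ∈ ℝ^d`, if `w` is distributed according to the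
centered Gaussian measure `N(0, σ⁻² I_d)` on `ℝ^d` (the `d`-fold product of
`N(0, σ⁻²)`), then
`∫ [cos ⟨w, x⟩ · cos ⟨w, x'⟩ + sin ⟨w, x⟩ · sin ⟨w, x'⟩] dN(0, σ⁻² I_d)(w)
  = exp (-‖x - x'‖² / (2σ²))`. -/
theorem random_fourier_features_unbiased_gaussian
    (d : ℕ) (σ : ℝ) (hσ : 0 < σ) (x x' : Fin d → ℝ) :
    ∫ w : Fin d → ℝ,
        (Real.cos (∑ i, w i * x i) * Real.cos (∑ i, w i * x' i)
          + Real.sin (∑ i, w i * x i) * Real.sin (∑ i, w i * x' i))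
        ∂(Measure.pi fun _ : Fin d => gaussianReal 0 ⟨σ⁻¹ ^ 2, by positivity⟩)
      = Real.exp (-(∑ i, (x i - x' i) ^ 2) / (2 * σ ^ 2)) := by
  set v : ℝ≥0 := ⟨σ⁻¹ ^ 2, by positivity⟩ with hvdef
  have hv : v ≠ 0 := by
    intro h
    have : (v : ℝ) = 0 := by rw [h]; simp
    rw [hvdef] at this
    change σ⁻¹ ^ 2 = 0 at this
    exact (by positivity : (0:ℝ) < σ⁻¹ ^ 2).ne' this
  have hvR : (v : ℝ) = σ⁻¹ ^ 2 := rfl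
  simp_rw [← Real.cos_sub, ← Finset.sum_sub_distrib, ← mul_sub]
  letI : MeasureSpace ℝ := ⟨gaussianReal 0 v⟩
  haveI : IsProbabilityMeasure (volume : Measure ℝ) :=
    inferInstanceAs (IsProbabilityMeasure (gaussianReal 0 v))
  have hmeas : (Measure.pi fun _ : Fin d => gaussianReal 0 v) = (volume : Measure (Fin d → ℝ)) :=
    rfl
  rw [hmeas]
  haveI : IsProbabilityMeasure (volume : Measure (Fin d → ℝ)) := by
    rw [← hmeas]; infer_instance
  have hmg : Measurable (fun w : Fin d → ℝ => ∑ i, w i * (x i - x' i)) := by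
    exact Finset.measurable_sum _ fun i _ => (measurable_pi_apply i).mul_const _
  have hint : Integrable (fun w : Fin d → ℝ =>
      Complex.exp (↑(∑ i, w i * (x i - x' i)) * Complex.I)) volume :=
    gauss_integrable_cexp _ _ hmg
  have h := integral_re hint
  simp only [RCLike.re_to_complex, Complex.exp_ofReal_mul_I_re] at h
  rw [h]
  have h2 : ∫ w : Fin d → ℝ, Complex.exp (↑(∑ i, w i * (x i - x' i)) * Complex.I)
      = ((∏ i, Complex.exp (((-((x i - x' i) ^ 2 * (v:ℝ)) / 2 : ℝ) : ℂ))) : ℂ) := by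
    have heq : ∀ w : Fin d → ℝ, Complex.exp (↑(∑ i, w i * (x i - x' i)) * Complex.I)
        = ∏ i, Complex.exp (↑(w i * (x i - x' i)) * Complex.I) := by
      intro w
      rw [← Complex.exp_sum]
      congr 1
      push_cast
      rw [Finset.sum_mul]
    simp_rw [heq]
    rw [← hmeas, integral_fintype_prod_eq_prod (f := fun i (t : ℝ) =>
      Complex.exp (↑(t * (x i - x' i)) * Complex.I))]
    exact Finset.prod_congr rfl fun i _ => gauss_int_cexp v hv _
  rw [h2]
  simp_rw [← Complex.exp_sum, ← Complex.ofReal_sum, Complex.exp_ofReal_re]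
  congr 1
  have hterm : ∀ i : Fin d, -((x i - x' i) ^ 2 * (v:ℝ)) / 2
      = σ⁻¹ ^ 2 / 2 * (-(x i - x' i) ^ 2) := fun i => by rw [hvR]; ring
  simp_rw [hterm, ← Finset.mul_sum, ← Finset.sum_neg_distrib]
  field_simp
end

section
/- Positive semidefiniteness of the Gaussian kernel: for every σ > 0, every n, every x_1, …, x_n ∈ ℝ^d and every c_1, …, c_n ∈ ℝ, Σ_{i=1}^n Σ_{j=1}^n c_i c_j exp(−‖x_i − x_j‖² / (2σ²)) ≥ 0. -/
open Finset

lemma inner_pow_psd {n d : ℕ} (m : ℕ) (a : Fin n → ℝ) (y : Fin n → Fin d → ℝ) :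
    0 ≤ ∑ i, ∑ j, a i * a j * (∑ l, y i l * y j l) ^ m := by
  have key : ∀ i j : Fin n, a i * a j * (∑ l, y i l * y j l) ^ m
      = ∑ f ∈ Fintype.piFinset (fun _ : Fin m => (univ : Finset (Fin d))),
          (a i * ∏ t, y i (f t)) * (a j * ∏ t, y j (f t)) := by
    intro i j
    have h1 : (∑ l, y i l * y j l) ^ m = ∏ _t : Fin m, (∑ l, y i l * y j l) := by
      simp
    rw [h1, Finset.prod_univ_sum, Finset.mul_sum]
    refine Finset.sum_congr rfl fun f _ => ?_
    rw [Finset.prod_mul_distrib]; ring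
  have h2 : ∑ i, ∑ j, a i * a j * (∑ l, y i l * y j l) ^ m
      = ∑ f ∈ Fintype.piFinset (fun _ : Fin m => (univ : Finset (Fin d))),
          (∑ i, a i * ∏ t, y i (f t)) ^ 2 := by
    have e1 : ∑ i, ∑ j, a i * a j * (∑ l, y i l * y j l) ^ m
        = ∑ i : Fin n, ∑ f ∈ Fintype.piFinset (fun _ : Fin m => (univ : Finset (Fin d))),
            ∑ j : Fin n, (a i * ∏ t, y i (f t)) * (a j * ∏ t, y j (f t)) := by
      refine Finset.sum_congr rfl fun i _ => ?_
      simp_rw [key]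
      exact Finset.sum_comm
    rw [e1, Finset.sum_comm]
    refine Finset.sum_congr rfl fun f _ => ?_
    rw [sq, Fintype.sum_mul_sum]
  rw [h2]
  exact Finset.sum_nonneg fun f _ => sq_nonneg _

/-- **Positive semidefiniteness of the Gaussian kernel.**
For every `σ > 0`, every `n`, every `x₁, …, xₙ ∈ ℝ^d` and every `c₁, …, cₙ ∈ ℝ`,
`∑ i ∑ j, c i * c j * exp (-‖x i - x j‖² / (2σ²)) ≥ 0`. -/
theorem gaussian_kernel_positive_semidefinite
    (d : ℕ) (σ : ℝ) (hσ : 0 < σ) (n : ℕ)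
    (x : Fin n → Fin d → ℝ) (c : Fin n → ℝ) :
    0 ≤ ∑ i, ∑ j,
        c i * c j * Real.exp (-(∑ l, (x i l - x j l) ^ 2) / (2 * σ ^ 2)) := by
  have hσ2 : (σ:ℝ) ^ 2 ≠ 0 := pow_ne_zero _ hσ.ne'
  set b : Fin n → ℝ := fun i => c i * Real.exp (-(∑ l, x i l ^ 2) / (2 * σ ^ 2)) with hb
  set s : Fin n → Fin n → ℝ := fun i j => (∑ l, x i l * x j l) / σ ^ 2 with hs
  have split : ∀ i j, c i * c j * Real.exp (-(∑ l, (x i l - x j l) ^ 2) / (2 * σ ^ 2))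
      = b i * b j * Real.exp (s i j) := by
    intro i j
    rw [hb, hs]
    simp only
    have hexpand : ∑ l, (x i l - x j l) ^ 2
        = ∑ l, x i l ^ 2 + ∑ l, x j l ^ 2 - 2 * ∑ l, x i l * x j l := by
      rw [← Finset.sum_add_distrib, Finset.mul_sum, ← Finset.sum_sub_distrib]
      exact Finset.sum_congr rfl fun l _ => by ring
    have harg : -(∑ l, (x i l - x j l) ^ 2) / (2 * σ ^ 2)
        = -(∑ l, x i l ^ 2) / (2 * σ ^ 2) + -(∑ l, x j l ^ 2) / (2 * σ ^ 2)
          + (∑ l, x i l * x j l) / σ ^ 2 := by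
      rw [hexpand]; field_simp; ring
    rw [harg, Real.exp_add, Real.exp_add]; ring
  simp_rw [split]
  have hexp : ∀ i j, b i * b j * Real.exp (s i j)
      = ∑' m : ℕ, b i * b j * (s i j ^ m / (m.factorial : ℝ)) := by
    intro i j
    rw [Real.exp_eq_exp_ℝ, NormedSpace.exp_eq_tsum_div, tsum_mul_left]
  have hsummable : ∀ i j : Fin n,
      Summable (fun m : ℕ => b i * b j * (s i j ^ m / (m.factorial : ℝ))) :=
    fun i j => (Real.summable_pow_div_factorial (s i j)).mul_left _
  have hswap : ∑ i, ∑ j, b i * b j * Real.exp (s i j)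
      = ∑' m : ℕ, ∑ i, ∑ j, b i * b j * (s i j ^ m / (m.factorial : ℝ)) := by
    simp_rw [hexp]
    exact (Finset.sum_congr rfl fun i _ => (Summable.tsum_finsetSum fun j _ => hsummable i j).symm).trans
      (Summable.tsum_finsetSum fun i _ => summable_sum fun j _ => hsummable i j).symm
  rw [hswap]
  refine tsum_nonneg fun m => ?_
  have hterm : ∑ i, ∑ j, b i * b j * (s i j ^ m / (m.factorial : ℝ))
      = ((σ ^ 2) ^ m * (m.factorial : ℝ))⁻¹
        * ∑ i, ∑ j, b i * b j * (∑ l, x i l * x j l) ^ m := by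
    rw [Finset.mul_sum]
    refine Finset.sum_congr rfl fun i _ => ?_
    rw [Finset.mul_sum]
    refine Finset.sum_congr rfl fun j _ => ?_
    rw [hs]
    simp only
    rw [div_pow]
    have hfac : ((m.factorial : ℝ)) ≠ 0 := Nat.cast_ne_zero.2 m.factorial_ne_zero
    field_simp
  rw [hterm]
  exact mul_nonneg (inv_nonneg.2 (mul_nonneg (pow_nonneg (sq_nonneg σ) m)
    (Nat.cast_nonneg _))) (inner_pow_psd m b x)
end
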